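/- Let δ ≥ 0, ρ > 0, s_0 > 0, times 0 = T_0 < T_1 < ... < T_m, and credit transfers e_1, ..., e_m ≥ 0. Define s(T_0) := s_0 and s(T_k) := s(T_{k-1}) e^{−ρ(T_k − T_{k-1})} + e_k for k = 1, ..., m; define r(u) := (δ + ρ) s(T_k) e^{−ρ(u − T_k)} for u ∈ [T_k, T_{k+1}) (with T_{m+1} = ∞, k = 0, ..., m) and c(u) := (δ + ρ) s_0 e^{−ρu} for u ≥ 0. Then: (i) for each k ≥ 1, s(T_{k-1}) e^{δ(T_k − T_{k-1})} − ∫_{T_{k-1}}^{T_k} e^{δ(T_k − u)} (δ + ρ) s(T_{k-1}) e^{−ρ(u − T_{k-1})} du = s(T_{k-1}) e^{−ρ(T_k − T_{k-1})}; and (ii) for every u ≥ 0, r(u) − c(u) = Σ_{k=1}^m (δ + ρ) e^{−ρ(u − T_k)} e_k · 1_{T_k ≤ u} ≥ 0. -/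

import Mathlib

open MeasureTheory Finset

private lemma stmt14_exp_int (c a b : ℝ) (hc : c ≠ 0) :
    ∫ u in a..b, Real.exp (c*u) = (Real.exp (c*b) - Real.exp (c*a))/c := by
  have key : ∀ u : ℝ, HasDerivAt (fun x => Real.exp (c*x)/c) (Real.exp (c*u)) u := by
    intro u
    have h := (((hasDerivAt_id u).const_mul c).exp).div_const c
    rw [show Real.exp (c*u) = Real.exp (c*u) * c / c by field_simp]
    simpa using h
  rw [intervalIntegral.integral_eq_sub_of_hasDerivAt (fun u _ => key u)
    ((Real.continuous_exp.comp (continuous_const.mul continuous_id)).intervalIntegrable a b)]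
  ring

theorem stmt_14 (δ ρ s0 : ℝ) (hδ : 0 ≤ δ) (hρ : 0 < ρ) (hs0 : 0 < s0)
    (m : ℕ) (T : ℕ → ℝ) (hT0 : T 0 = 0)
    (hTmono : ∀ k, k < m → T k < T (k + 1))
    (e : ℕ → ℝ) (he : ∀ k, 1 ≤ k → k ≤ m → 0 ≤ e k)
    (S : ℕ → ℝ) (hS0 : S 0 = s0)
    (hSrec : ∀ k, 1 ≤ k → k ≤ m →
      S k = S (k - 1) * Real.exp (-ρ * (T k - T (k - 1))) + e k)
    (r c : ℝ → ℝ)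
    (hr : ∀ k, k < m → ∀ u, T k ≤ u → u < T (k + 1) →
      r u = (δ + ρ) * S k * Real.exp (-ρ * (u - T k)))
    (hrlast : ∀ u, T m ≤ u → r u = (δ + ρ) * S m * Real.exp (-ρ * (u - T m)))
    (hc : ∀ u, c u = (δ + ρ) * s0 * Real.exp (-ρ * u)) :
    (∀ k, 1 ≤ k → k ≤ m →
      S (k - 1) * Real.exp (δ * (T k - T (k - 1)))
        - (∫ u in T (k - 1)..T k,
            Real.exp (δ * (T k - u)) * ((δ + ρ) * S (k - 1) * Real.exp (-ρ * (u - T (k - 1)))))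
      = S (k - 1) * Real.exp (-ρ * (T k - T (k - 1)))) ∧
    (∀ u, 0 ≤ u →
      r u - c u = (∑ k ∈ Finset.Icc 1 m,
        Set.indicator (Set.Ici (T k)) (fun v => (δ + ρ) * Real.exp (-ρ * (v - T k)) * e k) u) ∧
      0 ≤ r u - c u) := by
  classical
  have hδρ : (0:ℝ) < δ + ρ := by linarith
  have hne : δ + ρ ≠ 0 := ne_of_gt hδρ
  -- monotonicity of T on [0, m]
  have hmono : ∀ i j, i ≤ j → j ≤ m → T i ≤ T j := by
    intro i j hij hjm
    obtain ⟨n, rfl⟩ := Nat.exists_eq_add_of_le hij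
    clear hij
    induction n with
    | zero => simp
    | succ n ih =>
        have h1 : i + n < m := by omega
        have h2 := ih (by omega)
        have h3 := hTmono (i+n) h1
        have : i + (n+1) = (i+n) + 1 := by omega
        rw [this]
        linarith
  -- closed form for S
  have hclosed : ∀ k, k ≤ m →
      S k * Real.exp (ρ * T k) = s0 + ∑ j ∈ Icc 1 k, e j * Real.exp (ρ * T j) := by
    intro k hk
    induction k with
    | zero => simp [hS0, hT0]
    | succ k ih =>
        have ih' := ih (by omega)
        have hrec := hSrec (k+1) (by omega) hk
        simp only [Nat.add_sub_cancel] at hrec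
        rw [Finset.sum_Icc_succ_top (by omega : 1 ≤ k+1), hrec]
        have hE : Real.exp (-ρ * (T (k+1) - T k)) * Real.exp (ρ * T (k+1))
            = Real.exp (ρ * T k) := by
          rw [← Real.exp_add]; congr 1; ring
        linear_combination ih' + S k * hE
  constructor
  · -- part (i)
    intro k hk1 hkm
    set a := T (k-1) with ha
    set b := T k with hb
    set Sp := S (k-1) with hSp
    have hint : ∀ u : ℝ, Real.exp (δ*(b-u)) * ((δ+ρ)*Sp*Real.exp (-ρ*(u-a)))
        = ((δ+ρ)*Sp*Real.exp (δ*b+ρ*a)) * Real.exp (-(δ+ρ)*u) := by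
      intro u
      rw [show Real.exp (δ*(b-u)) * ((δ+ρ)*Sp*Real.exp (-ρ*(u-a)))
          = (δ+ρ)*Sp*(Real.exp (δ*(b-u)) * Real.exp (-ρ*(u-a))) from by ring,
        ← Real.exp_add,
        show ((δ+ρ)*Sp*Real.exp (δ*b+ρ*a)) * Real.exp (-(δ+ρ)*u)
          = (δ+ρ)*Sp*(Real.exp (δ*b+ρ*a) * Real.exp (-(δ+ρ)*u)) from by ring,
        ← Real.exp_add]
      congr 2
      ring
    rw [show (∫ u in a..b, Real.exp (δ*(b-u)) * ((δ+ρ)*Sp*Real.exp (-ρ*(u-a))))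
        = ∫ u in a..b, ((δ+ρ)*Sp*Real.exp (δ*b+ρ*a)) * Real.exp (-(δ+ρ)*u) from by
      simp only [hint]]
    rw [intervalIntegral.integral_const_mul, stmt14_exp_int _ _ _ (neg_ne_zero.mpr hne)]
    have e1 : Real.exp (δ*b+ρ*a) * Real.exp (-(δ+ρ)*b) = Real.exp (-ρ*(b-a)) := by
      rw [← Real.exp_add]; congr 1; ring
    have e2 : Real.exp (δ*b+ρ*a) * Real.exp (-(δ+ρ)*a) = Real.exp (δ*(b-a)) := by
      rw [← Real.exp_add]; congr 1; ring
    have hdiv : (Real.exp (-(δ+ρ)*b) - Real.exp (-(δ+ρ)*a))/(-(δ+ρ))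
        = (Real.exp (-(δ+ρ)*a) - Real.exp (-(δ+ρ)*b))/(δ+ρ) := by
      rw [div_neg, ← neg_div]; congr 1; ring
    have hgen : ∀ x : ℝ, (δ+ρ)*Sp*Real.exp (δ*b+ρ*a) * (x/(δ+ρ))
        = Sp*(Real.exp (δ*b+ρ*a)*x) := by
      intro x; field_simp
    rw [hdiv, hgen, show Real.exp (δ*b+ρ*a)*(Real.exp (-(δ+ρ)*a) - Real.exp (-(δ+ρ)*b))
        = Real.exp (δ*(b-a)) - Real.exp (-ρ*(b-a)) from by rw [mul_sub, e1, e2]]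
    ring
  · -- part (ii)
    intro u hu
    set P : ℕ → Prop := fun j => T j ≤ u with hP
    set k := Nat.findGreatest P m with hkdef
    have hkm : k ≤ m := Nat.findGreatest_le m
    have hPk : T k ≤ u :=
      Nat.findGreatest_spec (Nat.zero_le m) (show P 0 by simp [hP, hT0, hu])
    have hgt : ∀ j, k < j → j ≤ m → ¬ (T j ≤ u) := by
      intro j h1 h2
      exact Nat.findGreatest_is_greatest h1 h2
    have hr_val : r u = (δ+ρ) * S k * Real.exp (-ρ * (u - T k)) := by
      rcases eq_or_lt_of_le hkm with h | h
      · rw [h] at hPk ⊢; exact hrlast u hPk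
      · refine hr k h u hPk ?_
        by_contra hcon
        exact hgt (k+1) (by omega) (by omega) (by linarith)
    have hsum : (∑ j ∈ Icc 1 m,
        Set.indicator (Set.Ici (T j)) (fun v => (δ + ρ) * Real.exp (-ρ * (v - T j)) * e j) u)
        = ∑ j ∈ Icc 1 k, (δ + ρ) * Real.exp (-ρ * (u - T j)) * e j := by
      rw [← Finset.sum_subset (Finset.Icc_subset_Icc_right hkm)
        (by
          intro j hj hj'
          simp only [Finset.mem_Icc] at hj hj'
          have hjk : k < j := by omega
          exact Set.indicator_of_notMem (by
            simp only [Set.mem_Ici, not_le]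
            exact lt_of_not_ge (hgt j hjk hj.2)) _)]
      refine Finset.sum_congr rfl ?_
      intro j hj
      simp only [Finset.mem_Icc] at hj
      have : T j ≤ u := le_trans (hmono j k hj.2 hkm) hPk
      exact Set.indicator_of_mem this _
    have hmain : r u - c u = ∑ j ∈ Icc 1 m,
        Set.indicator (Set.Ici (T j)) (fun v => (δ + ρ) * Real.exp (-ρ * (v - T j)) * e j) u := by
      rw [hsum, hr_val, hc]
      have hx : ∀ t : ℝ, Real.exp (-ρ * (u - t)) = Real.exp (-ρ * u) * Real.exp (ρ * t) := by
        intro t; rw [← Real.exp_add]; congr 1; ring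
      have hrhs : (∑ j ∈ Icc 1 k, (δ + ρ) * Real.exp (-ρ * (u - T j)) * e j)
          = (δ + ρ) * Real.exp (-ρ * u) * (∑ j ∈ Icc 1 k, e j * Real.exp (ρ * T j)) := by
        rw [Finset.mul_sum]
        refine Finset.sum_congr rfl ?_
        intro j _
        rw [hx]; ring
      rw [hrhs, hx]
      linear_combination ((δ+ρ) * Real.exp (-ρ*u)) * (hclosed k hkm)
    refine ⟨hmain, ?_⟩
    rw [hmain]
    refine Finset.sum_nonneg ?_
    intro j hj
    simp only [Finset.mem_Icc] at hj
    refine Set.indicator_nonneg ?_ u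
    intro v _
    exact mul_nonneg (mul_nonneg hδρ.le (Real.exp_nonneg _)) (he j hj.1 hj.2)
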